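/- Let m : ℝ → [0,1] be measurable with ∫ x·m(x) dγ¹(x) = q(∫ m(x) dγ¹(x)) (equality in the center-of-mass bound, with nonnegative left side). Then there exists α ∈ ℝ such that m(x) = 1_{x ≥ α} for γ¹-almost every x. -/

import Mathlib

open MeasureTheory ProbabilityTheory Real Set Filter
open scoped ENNReal NNReal Topology

noncomputable def gamma1 : Measure ℝ := gaussianReal 0 1

noncomputable def Phi (t : ℝ) : ℝ :=
  ∫ s in Set.Iic t, (Real.sqrt (2 * Real.pi))⁻¹ * Real.exp (-s ^ 2 / 2)

noncomputable def Psi : ℝ → ℝ := Function.invFun Phi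

noncomputable def qfun (s : ℝ) : ℝ := -∫ x in Set.Iic (Psi s), x ∂gamma1

noncomputable def phi (x : ℝ) : ℝ := (Real.sqrt (2 * Real.pi))⁻¹ * Real.exp (-x ^ 2 / 2)

lemma phi_eq : phi = gaussianPDFReal 0 1 := by
  ext x
  simp [phi, gaussianPDFReal]

lemma phi_pos (x : ℝ) : 0 < phi x := by
  rw [phi_eq]; exact gaussianPDFReal_pos 0 1 x one_ne_zero

lemma phi_even (x : ℝ) : phi (-x) = phi x := by simp [phi]

lemma integrable_phi : Integrable phi := by
  rw [phi_eq]; exact integrable_gaussianPDFReal 0 1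

lemma continuous_phi : Continuous phi := by
  unfold phi; fun_prop

lemma integral_phi : ∫ x, phi x = 1 := by
  rw [phi_eq]; exact integral_gaussianPDFReal_eq_one 0 one_ne_zero

lemma gamma1_eq : gamma1 = volume.withDensity (fun x => ENNReal.ofReal (phi x)) := by
  rw [gamma1, gaussianReal_of_var_ne_zero 0 one_ne_zero, phi_eq]; rfl

lemma gamma1_apply (s : Set ℝ) :
    gamma1 s = ENNReal.ofReal (∫ x in s, phi x) := by
  rw [gamma1, gaussianReal_apply_eq_integral 0 one_ne_zero s, phi_eq]

lemma gamma1_withDensity_nn :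
    gamma1 = volume.withDensity (fun x => ((phi x).toNNReal : ℝ≥0∞)) := by
  rw [gamma1_eq]; rfl

lemma measurable_phi_nn : Measurable (fun x => (phi x).toNNReal) :=
  continuous_phi.measurable.real_toNNReal

lemma integral_gamma1 (g : ℝ → ℝ) :
    ∫ x, g x ∂gamma1 = ∫ x, phi x * g x := by
  rw [gamma1_withDensity_nn, integral_withDensity_eq_integral_smul measurable_phi_nn]
  congr 1; ext x
  simp [NNReal.smul_def, Real.coe_toNNReal _ (phi_pos x).le]

lemma setIntegral_gamma1 {s : Set ℝ} (hs : MeasurableSet s) (g : ℝ → ℝ) :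
    ∫ x in s, g x ∂gamma1 = ∫ x in s, phi x * g x := by
  rw [gamma1_withDensity_nn, restrict_withDensity hs,
    integral_withDensity_eq_integral_smul measurable_phi_nn]
  congr 1; ext x
  simp [NNReal.smul_def, Real.coe_toNNReal _ (phi_pos x).le]

lemma integrable_gamma1_iff {g : ℝ → ℝ} :
    Integrable g gamma1 ↔ Integrable (fun x => g x * phi x) := by
  rw [gamma1_eq, integrable_withDensity_iff
    (by exact ENNReal.measurable_ofReal.comp continuous_phi.measurable)
    (ae_of_all _ fun x => ENNReal.ofReal_lt_top)]
  constructor <;>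
  · intro h
    apply h.congr
    filter_upwards with x
    simp [ENNReal.toReal_ofReal (phi_pos x).le]

lemma integrable_phi_mul_id : Integrable (fun x => phi x * x) := by
  have h := (integrable_mul_exp_neg_mul_sq (by norm_num : (0:ℝ) < 1/2)).const_mul
    ((Real.sqrt (2 * Real.pi))⁻¹)
  apply h.congr
  filter_upwards with x
  simp only [phi]
  ring_nf

lemma hasDerivAt_neg_phi (x : ℝ) : HasDerivAt (fun y => -phi y) (phi x * x) x := by
  have h1 : HasDerivAt (fun y : ℝ => -y ^ 2 / 2) (-x) x := by
    have h : HasDerivAt (fun y : ℝ => -y ^ 2 / 2) (-((2:ℕ) * x ^ (2 - 1)) / 2) x :=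
      ((hasDerivAt_pow 2 x).neg).div_const 2
    convert h using 1
    norm_num
    ring
  have h3 := ((h1.exp).const_mul ((Real.sqrt (2 * Real.pi))⁻¹)).neg
  have hd : -((Real.sqrt (2 * Real.pi))⁻¹ * (Real.exp (-x ^ 2 / 2) * -x)) = phi x * x := by
    simp only [phi]; ring
  rw [← hd]
  exact h3

lemma tendsto_phi_atTop : Tendsto phi atTop (𝓝 0) := by
  have h : Tendsto (fun x : ℝ => -x ^ 2 / 2) atTop atBot := by
    apply Tendsto.atBot_div_const (by norm_num)
    exact tendsto_neg_atTop_atBot.comp (tendsto_pow_atTop two_ne_zero)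
  have h2 := (Real.tendsto_exp_atBot.comp h).const_mul ((Real.sqrt (2 * Real.pi))⁻¹)
  rw [mul_zero] at h2
  exact h2

lemma tendsto_phi_atBot : Tendsto phi atBot (𝓝 0) := by
  have h : Tendsto (fun x : ℝ => -x ^ 2 / 2) atBot atBot := by
    apply Tendsto.atBot_div_const (by norm_num)
    have hp : Tendsto (fun x : ℝ => x ^ 2) atTop atTop := tendsto_pow_atTop two_ne_zero
    have h2 : Tendsto (fun x : ℝ => x ^ 2) atBot atTop := by
      refine (hp.comp tendsto_abs_atBot_atTop).congr ?_
      intro x; simp [Function.comp, sq_abs]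
    have h3 : Tendsto (fun x : ℝ => -x) atTop atBot := tendsto_neg_atTop_atBot
    exact h3.comp h2
  have h2 := (Real.tendsto_exp_atBot.comp h).const_mul ((Real.sqrt (2 * Real.pi))⁻¹)
  rw [mul_zero] at h2
  exact h2

lemma tendsto_neg_phi_atBot : Tendsto (fun y => -phi y) atBot (𝓝 0) := by
  simpa using tendsto_phi_atBot.neg

lemma tendsto_neg_phi_atTop : Tendsto (fun y => -phi y) atTop (𝓝 0) := by
  simpa using tendsto_phi_atTop.neg

lemma integral_Iic_phi_mul (t : ℝ) : ∫ x in Iic t, phi x * x = -phi t := by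
  have h := integral_Iic_of_hasDerivAt_of_tendsto' (a := t) (m := 0)
    (fun x _ => hasDerivAt_neg_phi x) integrable_phi_mul_id.integrableOn
    tendsto_neg_phi_atBot
  simpa using h

lemma integral_Ioi_phi_mul (t : ℝ) : ∫ x in Ioi t, phi x * x = phi t := by
  have h := integral_Ioi_of_hasDerivAt_of_tendsto' (a := t) (m := 0)
    (fun x _ => hasDerivAt_neg_phi x) integrable_phi_mul_id.integrableOn
    tendsto_neg_phi_atTop
  simpa using h

lemma integral_Iic_id_gamma1 (t : ℝ) : ∫ x in Iic t, x ∂gamma1 = -phi t := by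
  rw [setIntegral_gamma1 measurableSet_Iic, integral_Iic_phi_mul]

lemma qfun_eq (s : ℝ) : qfun s = phi (Psi s) := by
  rw [qfun, integral_Iic_id_gamma1, neg_neg]

lemma qfun_pos (s : ℝ) : 0 < qfun s := by rw [qfun_eq]; exact phi_pos _

lemma integrable_id_gamma1 : Integrable (fun x : ℝ => x) gamma1 := by
  rw [integrable_gamma1_iff]
  apply integrable_phi_mul_id.congr
  filter_upwards with x; ring

lemma integral_id_gamma1 : ∫ x, x ∂gamma1 = 0 := by
  rw [integral_gamma1]
  rw [← intervalIntegral.integral_Iic_add_Ioi (b := 0) integrable_phi_mul_id.integrableOn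
    integrable_phi_mul_id.integrableOn, integral_Iic_phi_mul, integral_Ioi_phi_mul]
  ring

lemma Phi_eq (t : ℝ) : Phi t = ∫ x in Iic t, phi x := rfl

lemma Phi_nonneg (t : ℝ) : 0 ≤ Phi t :=
  setIntegral_nonneg measurableSet_Iic (fun x _ => (phi_pos x).le)

lemma gamma1_Iic (t : ℝ) : gamma1 (Iic t) = ENNReal.ofReal (Phi t) := by
  rw [gamma1_apply, Phi_eq]

lemma Phi_eq_toReal (t : ℝ) : Phi t = (gamma1 (Iic t)).toReal := by
  rw [gamma1_Iic, ENNReal.toReal_ofReal (Phi_nonneg t)]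

lemma gamma1_singleton (x : ℝ) : gamma1 {x} = 0 := by
  rw [gamma1_apply]
  rw [show ({x} : Set ℝ) = {x} from rfl]
  have : ∫ y in ({x} : Set ℝ), phi y = 0 := by
    rw [Measure.restrict_eq_zero.mpr (by simp), integral_zero_measure]
  rw [this, ENNReal.ofReal_zero]

instance : IsProbabilityMeasure gamma1 :=
  inferInstanceAs (IsProbabilityMeasure (gaussianReal 0 1))

lemma continuous_Phi : Continuous Phi := by
  have h : Phi = fun t => Phi 0 + ∫ x in (0:ℝ)..t, phi x := by
    funext t
    rw [← intervalIntegral.integral_Iic_sub_Iic integrable_phi.integrableOn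
      integrable_phi.integrableOn, Phi_eq, Phi_eq]
    ring
  rw [h]
  exact continuous_const.add (integrable_phi.continuous_primitive 0)

lemma strictMono_Phi : StrictMono Phi := by
  intro s t hst
  have key : Phi t - Phi s = ∫ x in s..t, phi x :=
    intervalIntegral.integral_Iic_sub_Iic integrable_phi.integrableOn
      integrable_phi.integrableOn
  have pos : 0 < ∫ x in s..t, phi x :=
    intervalIntegral.intervalIntegral_pos_of_pos_on integrable_phi.intervalIntegrable
      (fun x _ => phi_pos x) hst
  linarith

lemma integral_Ici_phi (t : ℝ) : ∫ x in Ici t, phi x = Phi (-t) := by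
  have h := integral_comp_neg_Iic (c := -t) (f := phi)
  rw [neg_neg] at h
  rw [Phi_eq, integral_Ici_eq_integral_Ioi, ← h]
  exact setIntegral_congr_fun measurableSet_Iic (fun x _ => phi_even x)

lemma Phi_add_Ioi (t : ℝ) : Phi t + ∫ x in Ioi t, phi x = 1 := by
  rw [Phi_eq, intervalIntegral.integral_Iic_add_Ioi integrable_phi.integrableOn
    integrable_phi.integrableOn, integral_phi]

lemma Phi_neg_eq (t : ℝ) : Phi (-t) = 1 - Phi t := by
  have h1 := integral_Ici_phi t
  rw [integral_Ici_eq_integral_Ioi] at h1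
  have h2 := Phi_add_Ioi t
  linarith

lemma tendsto_Phi_atTop : Tendsto Phi atTop (𝓝 1) := by
  have h1 : Tendsto (fun t => gamma1 (Iic t)) atTop (𝓝 (gamma1 univ)) :=
    tendsto_measure_Iic_atTop gamma1
  rw [measure_univ] at h1
  have h2 := (ENNReal.tendsto_toReal (by norm_num : (1 : ℝ≥0∞) ≠ ⊤)).comp h1
  simp only [ENNReal.toReal_one] at h2
  refine h2.congr (fun t => ?_)
  simp [Function.comp, ← Phi_eq_toReal]

lemma tendsto_Phi_atBot : Tendsto Phi atBot (𝓝 0) := by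
  have h1 : Tendsto (fun t : ℝ => Phi (-t)) atBot (𝓝 1) :=
    tendsto_Phi_atTop.comp tendsto_neg_atBot_atTop
  have h2 : Tendsto (fun t : ℝ => 1 - Phi (-t)) atBot (𝓝 (1 - 1)) :=
    tendsto_const_nhds.sub h1
  norm_num at h2
  refine h2.congr (fun t => ?_)
  rw [Phi_neg_eq]; ring

lemma Phi_Psi {a : ℝ} (h0 : 0 < a) (h1 : a < 1) : Phi (Psi a) = a := by
  have hex : ∃ t, Phi t = a := by
    obtain ⟨t₁, ht₁⟩ := (tendsto_Phi_atBot.eventually_lt_const h0).exists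
    obtain ⟨t₂, ht₂⟩ := (tendsto_Phi_atTop.eventually_const_lt h1).exists
    have ht : t₁ ≤ t₂ := by
      by_contra hc
      push_neg at hc
      exact absurd (strictMono_Phi hc) (by linarith)
    have := intermediate_value_Icc ht continuous_Phi.continuousOn
    obtain ⟨t, _, htt⟩ := this ⟨ht₁.le, ht₂.le⟩
    exact ⟨t, htt⟩
  exact Function.invFun_eq hex

theorem center_of_mass_equality_case (m : ℝ → ℝ) (hm : Measurable m)
    (hm01 : ∀ x, m x ∈ Set.Icc (0 : ℝ) 1)
    (hpos : 0 ≤ ∫ x, x * m x ∂gamma1)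
    (heq : ∫ x, x * m x ∂gamma1 = qfun (∫ x, m x ∂gamma1)) :
    ∃ α : ℝ, ∀ᵐ x ∂gamma1, m x = if α ≤ x then 1 else 0 := by
  have hm_int : Integrable m gamma1 :=
    Integrable.mono' (integrable_const 1) hm.aestronglyMeasurable
      (ae_of_all _ fun x => by
        rw [Real.norm_eq_abs, abs_of_nonneg (hm01 x).1]; exact (hm01 x).2)
  have hxm_int : Integrable (fun x => x * m x) gamma1 := by
    refine Integrable.mono' integrable_id_gamma1.abs
      ((measurable_id.mul hm).aestronglyMeasurable) (ae_of_all _ fun x => ?_)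
    rw [Real.norm_eq_abs, abs_mul]
    calc |x| * |m x| ≤ |x| * 1 := by
          gcongr
          rw [abs_of_nonneg (hm01 x).1]; exact (hm01 x).2
      _ = |x| := mul_one _
  set a := ∫ x, m x ∂gamma1 with ha_def
  have ha_nonneg : 0 ≤ a := integral_nonneg fun x => (hm01 x).1
  have ha_le : a ≤ 1 := by
    calc a ≤ ∫ _x, (1:ℝ) ∂gamma1 :=
          integral_mono hm_int (integrable_const 1) fun x => (hm01 x).2
      _ = 1 := by simp
  have ha0 : 0 < a := by
    rcases ha_nonneg.lt_or_eq with h | h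
    · exact h
    · exfalso
      have hmz : m =ᵐ[gamma1] 0 := by
        rw [← integral_eq_zero_iff_of_nonneg_ae (ae_of_all _ fun x => (hm01 x).1) hm_int]
        exact h.symm
      have hxz : (fun x => x * m x) =ᵐ[gamma1] 0 := by
        filter_upwards [hmz] with x hx
        simp only [Pi.zero_apply] at hx ⊢
        rw [hx, mul_zero]
      have h0 : ∫ x, x * m x ∂gamma1 = 0 := by
        rw [integral_congr_ae hxz]; simp
      rw [h0] at heq
      exact absurd heq.symm (qfun_pos a).ne'
  have ha1 : a < 1 := by
    rcases ha_le.lt_or_eq with h | h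
    · exact h
    · exfalso
      have hmz : (fun x => 1 - m x) =ᵐ[gamma1] 0 := by
        rw [← integral_eq_zero_iff_of_nonneg_ae
          (ae_of_all _ fun x => sub_nonneg.mpr (hm01 x).2)
          ((integrable_const 1).sub hm_int)]
        rw [integral_sub (integrable_const 1) hm_int]
        simp [← ha_def, h]
      have hxx : (fun x => x * m x) =ᵐ[gamma1] fun x => x := by
        filter_upwards [hmz] with x hx
        simp only [Pi.zero_apply] at hx
        have : m x = 1 := by linarith
        rw [this, mul_one]
      have h0 : ∫ x, x * m x ∂gamma1 = 0 := by
        rw [integral_congr_ae hxx, integral_id_gamma1]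
      rw [h0] at heq
      exact absurd heq.symm (qfun_pos a).ne'
  set t₀ := Psi a with ht₀
  have hPt : Phi t₀ = a := Phi_Psi ha0 ha1
  refine ⟨-t₀, ?_⟩
  set g : ℝ → ℝ := fun x => if -t₀ ≤ x then 1 else 0 with hg_def
  have hg_eq : g = (Ici (-t₀)).indicator (fun _ => (1:ℝ)) := by
    funext x
    simp [hg_def, indicator_apply, mem_Ici]
  have hg_meas : Measurable g := by
    rw [hg_eq]; exact measurable_const.indicator measurableSet_Ici
  have hg01 : ∀ x, 0 ≤ g x ∧ g x ≤ 1 := fun x => by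
    by_cases hx : -t₀ ≤ x <;> simp [hg_def, hx]
  have hg_int : Integrable g gamma1 :=
    Integrable.mono' (integrable_const 1) hg_meas.aestronglyMeasurable
      (ae_of_all _ fun x => by
        rw [Real.norm_eq_abs, abs_of_nonneg (hg01 x).1]; exact (hg01 x).2)
  have hxg_int : Integrable (fun x => x * g x) gamma1 := by
    refine Integrable.mono' integrable_id_gamma1.abs
      ((measurable_id.mul hg_meas).aestronglyMeasurable) (ae_of_all _ fun x => ?_)
    rw [Real.norm_eq_abs, abs_mul]
    calc |x| * |g x| ≤ |x| * 1 := by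
          gcongr
          rw [abs_of_nonneg (hg01 x).1]; exact (hg01 x).2
      _ = |x| := mul_one _
  have hint_g : ∫ x, g x ∂gamma1 = a := by
    rw [hg_eq, integral_indicator measurableSet_Ici, setIntegral_const, smul_eq_mul, mul_one]
    have h2 : gamma1 (Ici (-t₀)) = ENNReal.ofReal (Phi t₀) := by
      rw [gamma1_apply, integral_Ici_phi, neg_neg]
    rw [measureReal_def, h2, ENNReal.toReal_ofReal (Phi_nonneg t₀), hPt]
  have hint_xg : ∫ x, x * g x ∂gamma1 = qfun a := by
    have h1 : (fun x => x * g x) = (Ici (-t₀)).indicator (fun x => x) := by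
      funext x
      by_cases hx : -t₀ ≤ x <;> simp [hg_def, hx, indicator_apply, mem_Ici]
    rw [h1, integral_indicator measurableSet_Ici, setIntegral_gamma1 measurableSet_Ici,
      integral_Ici_eq_integral_Ioi, integral_Ioi_phi_mul, qfun_eq, ← ht₀]
    exact phi_even t₀
  have hrw : (fun x => (x + t₀) * (g x - m x)) =
      fun x => (x * g x - x * m x) + (t₀ * g x - t₀ * m x) := by
    funext x; ring
  have i1 : Integrable (fun x => x * g x - x * m x) gamma1 := hxg_int.sub hxm_int
  have i2 : Integrable (fun x => t₀ * g x - t₀ * m x) gamma1 :=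
    (hg_int.const_mul t₀).sub (hm_int.const_mul t₀)
  have hh_int : Integrable (fun x => (x + t₀) * (g x - m x)) gamma1 := by
    rw [hrw]
    exact i1.add i2
  have hh_zero : ∫ x, (x + t₀) * (g x - m x) ∂gamma1 = 0 := by
    rw [hrw, integral_add i1 i2,
      integral_sub hxg_int hxm_int,
      integral_sub (hg_int.const_mul t₀) (hm_int.const_mul t₀),
      integral_const_mul, integral_const_mul, hint_xg, heq, hint_g, ← ha_def]
    ring
  have hh_nonneg : ∀ x, 0 ≤ (x + t₀) * (g x - m x) := by
    intro x
    by_cases hx : -t₀ ≤ x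
    · apply mul_nonneg (by linarith)
      have : g x = 1 := by simp [hg_def, hx]
      rw [this]
      linarith [(hm01 x).2]
    · push_neg at hx
      have hg0 : g x = 0 := by simp [hg_def, not_le.mpr hx]
      have h1 : (0:ℝ) ≤ -(x + t₀) := by linarith
      have h2 : (0:ℝ) ≤ -(g x - m x) := by rw [hg0]; linarith [(hm01 x).1]
      have := mul_nonneg h1 h2
      rw [neg_mul_neg] at this
      exact this
  have hae : (fun x => (x + t₀) * (g x - m x)) =ᵐ[gamma1] 0 :=
    (integral_eq_zero_iff_of_nonneg_ae (ae_of_all _ hh_nonneg) hh_int).mp hh_zero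
  have hne : ∀ᵐ x ∂gamma1, x ≠ -t₀ := by
    have hz := gamma1_singleton (-t₀)
    rw [ae_iff]
    convert hz using 2
    ext x
    simp
  filter_upwards [hae, hne] with x hx hxne
  simp only [Pi.zero_apply] at hx
  have hx0 : x + t₀ ≠ 0 := fun hc => hxne (by linarith)
  have hgm : g x - m x = 0 := by
    rcases mul_eq_zero.mp hx with h | h
    · exact absurd h hx0
    · exact h
  have : m x = g x := by linarith
  rw [this]
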